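/- Let i ∈ [1,n] and b = low(i). If b < i, then γ^1_{[1,2]}(i) = min{ γ^1_{[1,2]}(b,i:i), γ^1_{[1,2]}(b,i:i,j), γ^1_{[1,2]}(b,i:i,j',k'), γ^{11}_{[1,2]}(b,i:i,j',k') : b ≤ j < i, b ≤ k' < j' < i }. -/
import Mathlib


/-- `G` is a graph with vertex set `{1,…,n}` (all edges lie inside `{1,…,n}`),
whose adjacency satisfies the interval-graph numbering property: whenever
`i < j < k` and `i` is adjacent to `k`, then `j` is adjacent to `k`. -/
def GoodNumbering (G : SimpleGraph ℕ) (n : ℕ) : Prop :=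
  (∀ u v : ℕ, G.Adj u v → u ∈ Finset.Icc 1 n ∧ v ∈ Finset.Icc 1 n) ∧
  (∀ i j k : ℕ, i < j → j < k → G.Adj i k → G.Adj j k)

/-- `low a = min N[a]`, the minimum of the closed neighborhood of `a`. -/
noncomputable def low (G : SimpleGraph ℕ) (a : ℕ) : ℕ :=
  sInf {b : ℕ | b = a ∨ G.Adj a b}

/-- `lowI a b = min {low k : k ∈ [a,b]}`. -/
noncomputable def lowI (G : SimpleGraph ℕ) (a b : ℕ) : ℕ :=
  sInf (low G '' Set.Icc a b)

/-- `maxlow a = max {low k : low a ≤ k ≤ a}`. -/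
noncomputable def maxlow (G : SimpleGraph ℕ) (a : ℕ) : ℕ :=
  sSup (low G '' Set.Icc (low G a) a)

/-- `D` is a `[1,2]`-dominating set of the induced subgraph `G[1,i]`:
`D ⊆ [1,i]` and every vertex of `[1,i]` outside `D` has at least one and at
most two neighbors in `D`. -/
def Dom12 (G : SimpleGraph ℕ) (i : ℕ) (D : Finset ℕ) : Prop :=
  D ⊆ Finset.Icc 1 i ∧
  ∀ v ∈ Finset.Icc 1 i, v ∉ D →
    1 ≤ {u ∈ (D : Set ℕ) | G.Adj v u}.ncard ∧ {u ∈ (D : Set ℕ) | G.Adj v u}.ncard ≤ 2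

/-- The minimum (in `ℕ∞`, with `sInf ∅ = ⊤`) of the cardinalities of the
`[1,2]`-dominating sets `D` of `G[1,i]` satisfying the extra property `P`. -/
noncomputable def gval (G : SimpleGraph ℕ) (i : ℕ) (P : Finset ℕ → Prop) : ℕ∞ :=
  sInf {k : ℕ∞ | ∃ D : Finset ℕ, Dom12 G i D ∧ P D ∧ (D.card : ℕ∞) = k}

/-- `γ_{[1,2]}(i)`. -/
noncomputable def g12 (G : SimpleGraph ℕ) (i : ℕ) : ℕ∞ :=
  gval G i fun _ => True

/-- `γ⁰_{[1,2]}(j,i)`: no vertex of `[j,i]` is in `D`. -/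
noncomputable def g0I (G : SimpleGraph ℕ) (j i : ℕ) : ℕ∞ :=
  gval G i fun D => ∀ x ∈ Finset.Icc j i, x ∉ D

/-- `γ⁰_{[1,2]}(j,i:k)`: `k ∈ D` and no other vertex of `[j,i]` is in `D`. -/
noncomputable def g0Ik (G : SimpleGraph ℕ) (j i k : ℕ) : ℕ∞ :=
  gval G i fun D => k ∈ D ∧ ∀ x ∈ Finset.Icc j i, x ≠ k → x ∉ D

/-- `γ¹_{[1,2]}(i)`: `i ∈ D`. -/
noncomputable def g1 (G : SimpleGraph ℕ) (i : ℕ) : ℕ∞ :=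
  gval G i fun D => i ∈ D

/-- `γ¹_{[1,2]}(j,i:i)`: `i ∈ D` and no vertex of `[j,i)` is in `D`. -/
noncomputable def g1I (G : SimpleGraph ℕ) (j i : ℕ) : ℕ∞ :=
  gval G i fun D => i ∈ D ∧ ∀ x ∈ Finset.Ico j i, x ∉ D

/-- `γ¹_{[1,2]}(k,i:i,j)`: `i, j ∈ D` and no other vertex of `[k,i)` is in `D`. -/
noncomputable def g1Ij (G : SimpleGraph ℕ) (k i j : ℕ) : ℕ∞ :=
  gval G i fun D => i ∈ D ∧ j ∈ D ∧ ∀ x ∈ Finset.Ico k i, x ≠ j → x ∉ D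

/-- `γ¹_{[1,2]}(l,i:i,j,k)`: `i, j, k ∈ D` and no other vertex of `[l,i)` is in `D`. -/
noncomputable def g1Ijk (G : SimpleGraph ℕ) (l i j k : ℕ) : ℕ∞ :=
  gval G i fun D => i ∈ D ∧ j ∈ D ∧ k ∈ D ∧ ∀ x ∈ Finset.Ico l i, x ≠ j → x ≠ k → x ∉ D

/-- `γ¹¹_{[1,2]}(l,i:i,j,k)`: `i, j ∈ D`, all of `[l,k] ⊆ D`, and no vertex of
`(k,i)` other than `j` is in `D`. -/
noncomputable def g11Ijk (G : SimpleGraph ℕ) (l i j k : ℕ) : ℕ∞ :=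
  gval G i fun D => i ∈ D ∧ j ∈ D ∧ (∀ x ∈ Finset.Icc l k, x ∈ D) ∧
    ∀ x ∈ Finset.Ioo k i, x ≠ j → x ∉ D

/-! Auxiliary lemmas -/

lemma low_le_self' (G : SimpleGraph ℕ) (a : ℕ) : low G a ≤ a :=
  Nat.sInf_le (Or.inl rfl)

lemma low_spec' (G : SimpleGraph ℕ) (a : ℕ) : low G a = a ∨ G.Adj a (low G a) := by
  have h : sInf {b : ℕ | b = a ∨ G.Adj a b} ∈ {b : ℕ | b = a ∨ G.Adj a b} :=
    Nat.sInf_mem ⟨a, Or.inl rfl⟩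
  exact h

lemma low_le_of_adj' {G : SimpleGraph ℕ} {a u : ℕ} (h : G.Adj a u) : low G a ≤ u :=
  Nat.sInf_le (Or.inr h)

lemma adj_of_low_le' {G : SimpleGraph ℕ} {n : ℕ} (hG : GoodNumbering G n)
    {z x : ℕ} (hz : low G z ≤ x) (hxz : x < z) : G.Adj x z := by
  have h := (low_spec' G z).resolve_left (by omega)
  rcases eq_or_lt_of_le hz with heq | hlt
  · exact heq ▸ h.symm
  · exact hG.2 (low G z) x z hlt hxz h.symm

section Main

variable {G : SimpleGraph ℕ} {n : ℕ} (hG : GoodNumbering G n) {i b : ℕ}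
  (hbdef : b = low G i) (hb : b < i)

include hG hbdef hb

/-- every vertex of `[b,i)` is adjacent to `i` -/
lemma adj_to_i {x : ℕ} (hbx : b ≤ x) (hxi : x < i) : G.Adj x i :=
  adj_of_low_le' hG (hbdef ▸ hbx) hxi

lemma one_le_b (hin : i ≤ n) : 1 ≤ b := by
  have hadj : G.Adj i b := by
    rw [hbdef]
    exact (low_spec' G i).resolve_left (by omega)
  exact (Finset.mem_Icc.mp (hG.1 i b hadj).2).1

/-- The key descent + classification lemma, by strong induction on `D.card`. -/
lemma exists_classified (hin : i ≤ n) :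
    ∀ m : ℕ, ∀ D : Finset ℕ, D.card = m → Dom12 G i D → i ∈ D →
    ∃ D' : Finset ℕ, Dom12 G i D' ∧ i ∈ D' ∧ D'.card ≤ D.card ∧
      ((∀ x ∈ Finset.Ico b i, x ∉ D') ∨
       (∃ j ∈ Finset.Ico b i, j ∈ D' ∧ ∀ x ∈ Finset.Ico b i, x ≠ j → x ∉ D') ∨
       (∃ j' ∈ Finset.Ico b i, ∃ k' ∈ Finset.Ico b j',
         (j' ∈ D' ∧ k' ∈ D' ∧ ∀ x ∈ Finset.Ico b i, x ≠ j' → x ≠ k' → x ∉ D') ∨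
         (j' ∈ D' ∧ (∀ x ∈ Finset.Icc b k', x ∈ D') ∧
           ∀ x ∈ Finset.Ioo k' i, x ≠ j' → x ∉ D'))) := by
  have hb1 : 1 ≤ b := one_le_b hG hbdef hb hin
  intro m
  induction m using Nat.strong_induction_on with
  | _ m IH =>
    intro D hcard hdom hiD
    set S : Finset ℕ := D ∩ Finset.Ico b i with hSdef
    have hSsub : ∀ {x}, x ∈ S → x ∈ D ∧ b ≤ x ∧ x < i := by
      intro x hx
      have := Finset.mem_inter.mp hx
      exact ⟨this.1, (Finset.mem_Ico.mp this.2).1, (Finset.mem_Ico.mp this.2).2⟩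
    have hSmem : ∀ {x}, x ∈ D → b ≤ x → x < i → x ∈ S := by
      intro x h1 h2 h3; exact Finset.mem_inter.mpr ⟨h1, Finset.mem_Ico.mpr ⟨h2, h3⟩⟩
    rcases Nat.lt_or_ge S.card 3 with hS3 | hS3
    · -- |S| ≤ 2 : direct classification
      interval_cases h : S.card
      · -- S empty
        have hSe : S = ∅ := Finset.card_eq_zero.mp h
        refine ⟨D, hdom, hiD, le_rfl, Or.inl ?_⟩
        intro x hx hxD
        have : x ∈ S := hSmem hxD (Finset.mem_Ico.mp hx).1 (Finset.mem_Ico.mp hx).2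
        simp [hSe] at this
      · -- S = {j}
        obtain ⟨j, hSj⟩ := Finset.card_eq_one.mp h
        have hjS : j ∈ S := by simp [hSj]
        obtain ⟨hjD, hjb, hji⟩ := hSsub hjS
        refine ⟨D, hdom, hiD, le_rfl, Or.inr (Or.inl ⟨j, Finset.mem_Ico.mpr ⟨hjb, hji⟩,
          hjD, ?_⟩)⟩
        intro x hx hxj hxD
        have : x ∈ S := hSmem hxD (Finset.mem_Ico.mp hx).1 (Finset.mem_Ico.mp hx).2
        rw [hSj] at this; simp at this; exact hxj this
      · -- S = {k', j'}
        obtain ⟨a, c, hac, hSac⟩ := Finset.card_eq_two.mp h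
        have haS : a ∈ S := by simp [hSac]
        have hcS : c ∈ S := by simp [hSac]
        obtain ⟨haD, hab, hai⟩ := hSsub haS
        obtain ⟨hcD, hcb, hci⟩ := hSsub hcS
        -- wlog a < c, set k' = min, j' = max
        rcases lt_or_gt_of_ne hac with hlt | hlt
        · refine ⟨D, hdom, hiD, le_rfl, Or.inr (Or.inr ⟨c, Finset.mem_Ico.mpr ⟨hcb, hci⟩,
            a, Finset.mem_Ico.mpr ⟨hab, hlt⟩, Or.inl ⟨hcD, haD, ?_⟩⟩)⟩
          intro x hx hxc hxa hxD
          have : x ∈ S := hSmem hxD (Finset.mem_Ico.mp hx).1 (Finset.mem_Ico.mp hx).2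
          rw [hSac] at this; simp at this; tauto
        · refine ⟨D, hdom, hiD, le_rfl, Or.inr (Or.inr ⟨a, Finset.mem_Ico.mpr ⟨hab, hai⟩,
            c, Finset.mem_Ico.mpr ⟨hcb, hlt⟩, Or.inl ⟨haD, hcD, ?_⟩⟩)⟩
          intro x hx hxa hxc hxD
          have : x ∈ S := hSmem hxD (Finset.mem_Ico.mp hx).1 (Finset.mem_Ico.mp hx).2
          rw [hSac] at this; simp at this; tauto
    · -- |S| ≥ 3
      have hSne : S.Nonempty := Finset.card_pos.mp (by omega)
      set j : ℕ := S.max' hSne with hjdef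
      have hjS : j ∈ S := S.max'_mem hSne
      have hSe_ne : (S.erase j).Nonempty := by
        rw [← Finset.card_pos, Finset.card_erase_of_mem hjS]; omega
      set k : ℕ := (S.erase j).max' hSe_ne with hkdef
      have hkSe : k ∈ S.erase j := (S.erase j).max'_mem hSe_ne
      have hkS : k ∈ S := Finset.mem_of_mem_erase hkSe
      have hkj : k < j :=
        lt_of_le_of_ne (S.le_max' k hkS) (Finset.ne_of_mem_erase hkSe)
      obtain ⟨hjD, hjb, hji⟩ := hSsub hjS
      obtain ⟨hkD, hkb, hki⟩ := hSsub hkS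
      by_cases hblk : ∀ x ∈ Finset.Icc b k, x ∈ D
      · -- block form: class 4
        refine ⟨D, hdom, hiD, le_rfl, Or.inr (Or.inr ⟨j, Finset.mem_Ico.mpr ⟨hjb, hji⟩,
          k, Finset.mem_Ico.mpr ⟨hkb, hkj⟩, Or.inr ⟨hjD, hblk, ?_⟩⟩)⟩
        intro x hx hxj hxD
        obtain ⟨hkx, hxi⟩ := Finset.mem_Ioo.mp hx
        have hxS : x ∈ S := hSmem hxD (by omega) hxi
        have : x ∈ S.erase j := Finset.mem_erase.mpr ⟨hxj, hxS⟩
        have := (S.erase j).le_max' x this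
        omega
      · -- gap: descent
        push_neg at hblk
        obtain ⟨x, hxIcc, hxD⟩ := hblk
        obtain ⟨hbx, hxk⟩ := Finset.mem_Icc.mp hxIcc
        have hxk' : x < k := lt_of_le_of_ne hxk (fun h => hxD (h ▸ hkD))
        have hxi : x < i := by omega
        have hxIcc1 : x ∈ Finset.Icc 1 i := Finset.mem_Icc.mpr ⟨by omega, by omega⟩
        -- at most one "exceptional" element
        have hNx2 := (hdom.2 x hxIcc1 hxD).2
        have hadjxi : G.Adj x i := adj_to_i hG hbdef hb hbx hxi
        have hDfin : ∀ v : ℕ, ({u ∈ (D : Set ℕ) | G.Adj v u}).Finite := fun v =>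
          D.finite_toSet.subset (fun u hu => hu.1)
        have excUnique : ∀ e1 e2 : ℕ, (e1 ∈ D ∧ x < e1 ∧ e1 < i ∧ low G e1 ≤ x) →
            (e2 ∈ D ∧ x < e2 ∧ e2 < i ∧ low G e2 ≤ x) → e1 = e2 := by
          intro e1 e2 ⟨h1D, h1x, h1i, h1l⟩ ⟨h2D, h2x, h2i, h2l⟩
          by_contra hne
          have a1 : G.Adj x e1 := adj_of_low_le' hG h1l h1x
          have a2 : G.Adj x e2 := adj_of_low_le' hG h2l h2x
          have hsub : ({e1, e2, i} : Set ℕ) ⊆ {u ∈ (D : Set ℕ) | G.Adj x u} := by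
            intro u hu
            rcases hu with rfl | rfl | rfl
            · exact ⟨h1D, a1⟩
            · exact ⟨h2D, a2⟩
            · exact ⟨hiD, hadjxi⟩
          have h3 : ({e1, e2, i} : Set ℕ).ncard = 3 := by
            rw [Set.ncard_insert_of_notMem (by simp; omega)
                (Set.Finite.insert _ (Set.finite_singleton _)),
              Set.ncard_insert_of_notMem (by simp; omega) (Set.finite_singleton _),
              Set.ncard_singleton]
          have := Set.ncard_le_ncard hsub (hDfin x)
          omega
        -- the removal set
        set Z : Finset ℕ := D.filter (fun z => x < z ∧ x < low G z) with hZdef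
        have hZsub : Z ⊆ D := Finset.filter_subset _ _
        have hiZ : i ∉ Z := by
          simp only [hZdef, Finset.mem_filter]
          rintro ⟨-, -, hlow⟩
          rw [← hbdef] at hlow; omega
        have hZne : Z.Nonempty := by
          by_cases hklow : low G k ≤ x
          · by_cases hjlow : low G j ≤ x
            · exact absurd (excUnique k j ⟨hkD, hxk', hki, hklow⟩
                ⟨hjD, by omega, hji, hjlow⟩) (by omega)
            · exact ⟨j, Finset.mem_filter.mpr ⟨hjD, by omega, by omega⟩⟩
          · exact ⟨k, Finset.mem_filter.mpr ⟨hkD, hxk', by omega⟩⟩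
        have hssub : D \ Z ⊂ D := Finset.sdiff_ssubset hZsub hZne
        have hcard' : (D \ Z).card < m := hcard ▸ Finset.card_lt_card hssub
        have hiD' : i ∈ D \ Z := Finset.mem_sdiff.mpr ⟨hiD, hiZ⟩
        -- Dom12 for D \ Z
        have hdom' : Dom12 G i (D \ Z) := by
          constructor
          · exact (Finset.sdiff_subset).trans hdom.1
          · intro v hv hvD'
            have hsubN : {u ∈ ((D \ Z : Finset ℕ) : Set ℕ) | G.Adj v u} ⊆
                {u ∈ (D : Set ℕ) | G.Adj v u} := by
              intro u hu
              refine ⟨?_, hu.2⟩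
              have := hu.1
              simp only [Finset.coe_sdiff, Set.mem_diff, Finset.mem_coe] at this
              exact this.1
            have hfin' : ({u ∈ ((D \ Z : Finset ℕ) : Set ℕ) | G.Adj v u}).Finite :=
              (hDfin v).subset hsubN
            by_cases hvD : v ∈ D
            · -- v ∈ Z
              have hvZ : v ∈ Z := by
                by_contra hvZ
                exact hvD' (Finset.mem_sdiff.mpr ⟨hvD, hvZ⟩)
              obtain ⟨-, hxv, hxlv⟩ := Finset.mem_filter.mp hvZ
              have hvi : v < i := lt_of_le_of_ne
                ((Finset.mem_Icc.mp (hdom.1 hvD)).2) (fun h => (h ▸ hiZ) hvZ)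
              have hadjvi : G.Adj v i := adj_to_i hG hbdef hb (by omega) hvi
              constructor
              · have hne : ({u ∈ ((D \ Z : Finset ℕ) : Set ℕ) | G.Adj v u}).Nonempty :=
                  ⟨i, by simpa using hiD', hadjvi⟩
                exact hne.ncard_pos hfin'
              · -- bound by {i, e0}
                classical
                by_cases hex : ∃ e : ℕ, e ∈ D ∧ x < e ∧ e < i ∧ low G e ≤ x
                · obtain ⟨e0, he0⟩ := hex
                  have hsub2 : {u ∈ ((D \ Z : Finset ℕ) : Set ℕ) | G.Adj v u} ⊆
                      ({i, e0} : Set ℕ) := by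
                    rintro u ⟨huD', hadj⟩
                    simp only [Finset.coe_sdiff, Set.mem_diff, Finset.mem_coe] at huD'
                    obtain ⟨huD, huZ⟩ := huD'
                    by_cases hui : u = i
                    · exact Or.inl hui
                    have hui' : u < i := lt_of_le_of_ne
                      ((Finset.mem_Icc.mp (hdom.1 huD)).2) hui
                    have hxu : x < u := by
                      rcases lt_trichotomy u v with h | h | h
                      · have : low G v ≤ u := low_le_of_adj' hadj
                        omega
                      · exact absurd (Finset.mem_sdiff.mpr ⟨huD, huZ⟩)
                          (h ▸ hvD')
                      · omega
                    have hulow : low G u ≤ x := by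
                      by_contra hc
                      exact huZ (Finset.mem_filter.mpr ⟨huD, hxu, by omega⟩)
                    exact Or.inr (Set.mem_singleton_iff.mpr
                      (excUnique u e0 ⟨huD, hxu, hui', hulow⟩ he0))
                  calc ({u ∈ ((D \ Z : Finset ℕ) : Set ℕ) | G.Adj v u}).ncard
                      ≤ ({i, e0} : Set ℕ).ncard := Set.ncard_le_ncard hsub2
                        (Set.Finite.insert _ (Set.finite_singleton _))
                    _ ≤ 2 := by
                        calc ({i, e0} : Set ℕ).ncard ≤ ({e0} : Set ℕ).ncard + 1 :=
                            Set.ncard_insert_le _ _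
                          _ = 2 := by rw [Set.ncard_singleton]
                · -- no exceptional: subset of {i}
                  push_neg at hex
                  have hsub2 : {u ∈ ((D \ Z : Finset ℕ) : Set ℕ) | G.Adj v u} ⊆
                      ({i} : Set ℕ) := by
                    rintro u ⟨huD', hadj⟩
                    simp only [Finset.coe_sdiff, Set.mem_diff, Finset.mem_coe] at huD'
                    obtain ⟨huD, huZ⟩ := huD'
                    by_cases hui : u = i
                    · exact hui
                    have hui' : u < i := lt_of_le_of_ne
                      ((Finset.mem_Icc.mp (hdom.1 huD)).2) hui
                    have hxu : x < u := by
                      rcases lt_trichotomy u v with h | h | h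
                      · have : low G v ≤ u := low_le_of_adj' hadj
                        omega
                      · exact absurd (Finset.mem_sdiff.mpr ⟨huD, huZ⟩) (h ▸ hvD')
                      · omega
                    have hulow : low G u ≤ x := by
                      by_contra hc
                      exact huZ (Finset.mem_filter.mpr ⟨huD, hxu, by omega⟩)
                    exact absurd hulow (by have := hex u huD hxu hui'; omega)
                  have := Set.ncard_le_ncard hsub2 (Set.finite_singleton _)
                  rw [Set.ncard_singleton] at this
                  omega
            · -- v ∉ D
              have hold := hdom.2 v hv hvD
              constructor
              · -- find a surviving neighbor
                have hne : ({u ∈ (D : Set ℕ) | G.Adj v u}).Nonempty :=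
                  Set.nonempty_of_ncard_ne_zero (by omega)
                obtain ⟨u, huD, hadj⟩ := hne
                by_cases hvb : b ≤ v
                · have hvi : v < i := lt_of_le_of_ne
                    ((Finset.mem_Icc.mp hv).2) (fun h => hvD (h ▸ hiD))
                  have : ({u ∈ ((D \ Z : Finset ℕ) : Set ℕ) | G.Adj v u}).Nonempty :=
                    ⟨i, by simpa using hiD', adj_to_i hG hbdef hb hvb hvi⟩
                  exact this.ncard_pos hfin'
                · push_neg at hvb
                  have huZ : u ∉ Z := by
                    intro huZ
                    obtain ⟨-, hxu, hxlu⟩ := Finset.mem_filter.mp huZ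
                    rcases lt_trichotomy u v with h | h | h
                    · omega
                    · exact hvD (h ▸ huD)
                    · have : low G u ≤ v := low_le_of_adj' hadj.symm
                      omega
                  have : ({w ∈ ((D \ Z : Finset ℕ) : Set ℕ) | G.Adj v w}).Nonempty :=
                    ⟨u, by simpa using Finset.mem_sdiff.mpr ⟨huD, huZ⟩, hadj⟩
                  exact this.ncard_pos hfin'
              · exact le_trans (Set.ncard_le_ncard hsubN (hDfin v)) hold.2
        -- apply IH
        obtain ⟨D'', hdom'', hiD'', hcard'', hclass⟩ :=
          IH (D \ Z).card hcard' (D \ Z) rfl hdom' hiD'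
        exact ⟨D'', hdom'', hiD'', by omega, hclass⟩

end Main

lemma gval_le_gval {G : SimpleGraph ℕ} {i : ℕ} {P Q : Finset ℕ → Prop}
    (h : ∀ D, P D → Q D) : gval G i Q ≤ gval G i P :=
  sInf_le_sInf (fun k ⟨D, hd, hp, hc⟩ => ⟨D, hd, h D hp, hc⟩)

/-- Lemma (ii): if `b = low(i) < i`, then `γ¹_{[1,2]}(i)` is the minimum of
`γ¹_{[1,2]}(b,i:i)`, `γ¹_{[1,2]}(b,i:i,j)` for `b ≤ j < i`, and
`γ¹_{[1,2]}(b,i:i,j',k')`, `γ¹¹_{[1,2]}(b,i:i,j',k')` for `b ≤ k' < j' < i`. -/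
theorem g1_recurrence (G : SimpleGraph ℕ) (n : ℕ) (hn : 1 ≤ n)
    (hG : GoodNumbering G n) (i b : ℕ) (hi : i ∈ Finset.Icc 1 n)
    (hbdef : b = low G i) (hb : b < i) :
    g1 G i =
      sInf {v : ℕ∞ | v = g1I G b i ∨
        (∃ j ∈ Finset.Ico b i, v = g1Ij G b i j) ∨
        (∃ j' ∈ Finset.Ico b i, ∃ k' ∈ Finset.Ico b j',
          v = g1Ijk G b i j' k' ∨ v = g11Ijk G b i j' k')} := by
  have hin : i ≤ n := (Finset.mem_Icc.mp hi).2
  apply le_antisymm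
  · apply le_sInf
    rintro v (rfl | ⟨j, hj, rfl⟩ | ⟨j', hj', k', hk', (rfl | rfl)⟩)
    · exact gval_le_gval (fun D h => h.1)
    · exact gval_le_gval (fun D h => h.1)
    · exact gval_le_gval (fun D h => h.1)
    · exact gval_le_gval (fun D h => h.1)
  · apply le_sInf
    rintro a ⟨D, hdom, hiD, rfl⟩
    obtain ⟨D', hdom', hiD', hcard', hclass⟩ :=
      exists_classified hG hbdef hb hin D.card D rfl hdom hiD
    have hDcast : (D'.card : ℕ∞) ≤ (D.card : ℕ∞) := Nat.cast_le.mpr hcard'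
    rcases hclass with h1 | ⟨j, hj, hjD, h2⟩ | ⟨j', hj', k', hk', (h3 | h4)⟩
    · refine le_trans (sInf_le (Or.inl rfl)) (le_trans ?_ hDcast)
      exact sInf_le ⟨D', hdom', ⟨hiD', h1⟩, rfl⟩
    · refine le_trans (sInf_le (Or.inr (Or.inl ⟨j, hj, rfl⟩))) (le_trans ?_ hDcast)
      exact sInf_le ⟨D', hdom', ⟨hiD', hjD, h2⟩, rfl⟩
    · refine le_trans (sInf_le (Or.inr (Or.inr ⟨j', hj', k', hk', Or.inl rfl⟩)))
        (le_trans ?_ hDcast)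
      exact sInf_le ⟨D', hdom', ⟨hiD', h3.1, h3.2.1, h3.2.2⟩, rfl⟩
    · refine le_trans (sInf_le (Or.inr (Or.inr ⟨j', hj', k', hk', Or.inr rfl⟩)))
        (le_trans ?_ hDcast)
      exact sInf_le ⟨D', hdom', ⟨hiD', h4.1, h4.2.1, h4.2.2⟩, rfl⟩
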